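/- Let G be a connected graph, let uv be an edge of G, and let G′ be the graph obtained from G by subdividing the edge uv three times. If γ₂ᵈ(G) ≤ |V(G)|/3, then γ₂ᵈ(G′) ≤ |V(G′)|/3. -/

import Mathlib

def IsDisjDomSet {V : Type*} (G : SimpleGraph V) (D : Set V) : Prop :=
  ∀ v : V, v ∉ D → (∃ u ∈ D, G.Adj v u) ∨
    (∃ u ∈ D, ∃ w ∈ D, u ≠ w ∧ G.dist v u = 2 ∧ G.dist v w = 2)

noncomputable def disjDomNum {V : Type*} (G : SimpleGraph V) : ℕ :=
  sInf {n : ℕ | ∃ D : Set V, IsDisjDomSet G D ∧ D.ncard = n}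

/-- The graph obtained from `G` by subdividing the edge `uv` three times: the edge `uv`
is replaced by the path `u – x₁ – x₂ – x₃ – v` through three new vertices
`x₁ = Sum.inr 0`, `x₂ = Sum.inr 1`, `x₃ = Sum.inr 2`. -/
def subdivideThrice {V : Type*} (G : SimpleGraph V) (u v : V) :
    SimpleGraph (V ⊕ Fin 3) :=
  SimpleGraph.fromRel (fun a b =>
    (∃ x y : V, a = Sum.inl x ∧ b = Sum.inl y ∧ G.Adj x y ∧
      ¬(x = u ∧ y = v) ∧ ¬(x = v ∧ y = u)) ∨
    (a = Sum.inl u ∧ b = Sum.inr 0) ∨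
    (a = Sum.inr 0 ∧ b = Sum.inr 1) ∨
    (a = Sum.inr 1 ∧ b = Sum.inr 2) ∨
    (a = Sum.inr 2 ∧ b = Sum.inl v))


open Sum


open Sum

section Helpers

variable {W : Type*} (H : SimpleGraph W)

lemma dist_eq_two_of {a b c : W} (h1 : H.Adj a b) (h2 : H.Adj b c)
    (h3 : ¬ H.Adj a c) (h4 : a ≠ c) : H.dist a c = 2 := by
  have hr : H.Reachable a c :=
    ⟨SimpleGraph.Walk.cons h1 (SimpleGraph.Walk.cons h2 SimpleGraph.Walk.nil)⟩
  have hle : H.dist a c ≤ 2 := by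
    have := H.dist_le (SimpleGraph.Walk.cons h1 (SimpleGraph.Walk.cons h2 SimpleGraph.Walk.nil))
    simpa using this
  have hne0 : H.dist a c ≠ 0 := fun h0 => h4 (hr.dist_eq_zero_iff.mp h0)
  have hne1 : H.dist a c ≠ 1 := fun h1' => h3 (SimpleGraph.dist_eq_one_iff_adj.mp h1')
  omega

lemma exists_mid_of_dist_eq_two {a c : W} (h : H.dist a c = 2) :
    ∃ b, H.Adj a b ∧ H.Adj b c := by
  obtain ⟨p, hp⟩ := H.exists_walk_of_dist_ne_zero (by rw [h]; omega)
  rw [h] at hp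
  cases p with
  | nil => simp at hp
  | cons h1 q =>
    cases q with
    | nil => simp at hp
    | cons h2 r =>
      simp [SimpleGraph.Walk.length_cons] at hp
      have := hp.eq
      subst this
      exact ⟨_, h1, h2⟩

lemma not_adj_of_dist_eq_two {a c : W} (h : H.dist a c = 2) : ¬ H.Adj a c := by
  intro hadj
  rw [← SimpleGraph.dist_eq_one_iff_adj (G := H)] at hadj
  omega

lemma ne_of_dist_eq_two {a c : W} (h : H.dist a c = 2) : a ≠ c := by
  intro he; subst he; simp [SimpleGraph.dist_self] at h

end Helpers

section Adj

variable {V : Type*} {G : SimpleGraph V} {u v : V}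

lemma sub_adj_inl_inl {x y : V} : (subdivideThrice G u v).Adj (inl x) (inl y) ↔
    G.Adj x y ∧ ¬(x = u ∧ y = v) ∧ ¬(x = v ∧ y = u) := by
  constructor
  · rintro ⟨hne, h | h⟩ <;> simp_all [subdivideThrice] <;>
      exact ⟨h.1.symm, fun h1 h2 => h.2.2 h2 h1, fun h1 h2 => h.2.1 h2 h1⟩
  · rintro ⟨hadj, h1, h2⟩
    exact ⟨by simp [hadj.ne], Or.inl (Or.inl ⟨x, y, rfl, rfl, hadj, h1, h2⟩)⟩

lemma sub_adj_u0 : (subdivideThrice G u v).Adj (inl u) (inr 0) :=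
  ⟨by simp, Or.inl (Or.inr (Or.inl ⟨rfl, rfl⟩))⟩

lemma sub_adj_01 : (subdivideThrice G u v).Adj (inr 0) (inr 1) :=
  ⟨by simp, Or.inl (Or.inr (Or.inr (Or.inl ⟨rfl, rfl⟩)))⟩

lemma sub_adj_12 : (subdivideThrice G u v).Adj (inr 1) (inr 2) :=
  ⟨by simp, Or.inl (Or.inr (Or.inr (Or.inr (Or.inl ⟨rfl, rfl⟩))))⟩

lemma sub_adj_2v : (subdivideThrice G u v).Adj (inr 2) (inl v) :=
  ⟨by simp, Or.inl (Or.inr (Or.inr (Or.inr (Or.inr ⟨rfl, rfl⟩))))⟩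

lemma sub_adj_inl_inr {x : V} {i : Fin 3} (h : (subdivideThrice G u v).Adj (inl x) (inr i)) :
    (x = u ∧ i = 0) ∨ (x = v ∧ i = 2) := by
  obtain ⟨hne, h | h⟩ := h <;> simp_all [subdivideThrice] <;> tauto

lemma sub_adj_inr_inr {i j : Fin 3} (h : (subdivideThrice G u v).Adj (inr i) (inr j)) :
    ((i = 0 ∧ j = 1) ∨ (i = 1 ∧ j = 0) ∨ (i = 1 ∧ j = 2) ∨ (i = 2 ∧ j = 1)) := by
  obtain ⟨hne, h | h⟩ := h <;> simp_all [subdivideThrice] <;> tauto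

end Adj
section Transfer

variable {V : Type*} {G : SimpleGraph V} {u v : V}

lemma sub_transfer_adj {w d : V} (hadj : G.Adj w d) (h1 : ¬(w = u ∧ d = v))
    (h2 : ¬(w = v ∧ d = u)) : (subdivideThrice G u v).Adj (inl w) (inl d) :=
  sub_adj_inl_inl.mpr ⟨hadj, h1, h2⟩

lemma sub_not_adj_inl_inl {w d : V} (h : ¬ G.Adj w d) :
    ¬ (subdivideThrice G u v).Adj (inl w) (inl d) :=
  fun ha => h (sub_adj_inl_inl.mp ha).1

lemma sub_transfer_dist2 {w d b : V} (hd : G.dist w d = 2) (h1 : G.Adj w b) (h2 : G.Adj b d)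
    (c1 : ¬(w = u ∧ b = v)) (c2 : ¬(w = v ∧ b = u)) (c3 : ¬(b = u ∧ d = v))
    (c4 : ¬(b = v ∧ d = u)) : (subdivideThrice G u v).dist (inl w) (inl d) = 2 :=
  dist_eq_two_of _ (sub_transfer_adj h1 c1 c2) (sub_transfer_adj h2 c3 c4)
    (sub_not_adj_inl_inl (not_adj_of_dist_eq_two G hd))
    (by simpa using ne_of_dist_eq_two G hd)

lemma sub_not_adj_inl_inr0 {x : V} (hx : x ≠ u) :
    ¬ (subdivideThrice G u v).Adj (inl x) (inr 0) := fun hA => by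
  rcases sub_adj_inl_inr hA with ⟨h, _⟩ | ⟨_, h⟩
  · exact hx h
  · exact absurd h (by decide)

lemma sub_not_adj_inl_inr2 {x : V} (hx : x ≠ v) :
    ¬ (subdivideThrice G u v).Adj (inl x) (inr 2) := fun hA => by
  rcases sub_adj_inl_inr hA with ⟨_, h⟩ | ⟨h, _⟩
  · exact absurd h (by decide)
  · exact hx h

lemma sub_not_adj_inr20 : ¬ (subdivideThrice G u v).Adj (inr 2) (inr 0) := fun hA => by
  have := sub_adj_inr_inr hA; revert this; decide

lemma sub_not_adj_inr02 : ¬ (subdivideThrice G u v).Adj (inr 0) (inr 2) := fun hA => by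
  have := sub_adj_inr_inr hA; revert this; decide

end Transfer

lemma sub_isDisjDom {V : Type*} {G : SimpleGraph V} {u v : V} (huv : G.Adj u v)
    {D : Set V} (hD : IsDisjDomSet G D) :
    ∃ i : Fin 3, IsDisjDomSet (subdivideThrice G u v) (insert (inr i) (inl '' D)) := by
  have hmem : ∀ (i : Fin 3) {d : V}, d ∈ D →
      (inl d : V ⊕ Fin 3) ∈ insert (inr i) (inl '' D) :=
    fun i _ hd => Set.mem_insert_iff.mpr (Or.inr (Set.mem_image_of_mem _ hd))
  have hmemr : ∀ (i : Fin 3), (inr i : V ⊕ Fin 3) ∈ insert (inr i) (inl '' D) :=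
    fun i => Set.mem_insert _ _
  by_cases hu : u ∈ D <;> by_cases hv : v ∈ D
  · -- Case 1 : u ∈ D, v ∈ D; add x₂ = inr 1
    refine ⟨1, ?_⟩
    rintro (w | j) ha
    · have hw : w ∉ D := fun h => ha (hmem _ h)
      have hwu : w ≠ u := fun e => hw (e ▸ hu)
      have hwv : w ≠ v := fun e => hw (e ▸ hv)
      rcases hD w hw with ⟨d, hdD, hadj⟩ | ⟨d1, hd1, d2, hd2, hne, h1, h2⟩
      · exact Or.inl ⟨inl d, hmem _ hdD, sub_transfer_adj hadj (by tauto) (by tauto)⟩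
      · obtain ⟨b1, hb11, hb12⟩ := exists_mid_of_dist_eq_two G h1
        obtain ⟨b2, hb21, hb22⟩ := exists_mid_of_dist_eq_two G h2
        by_cases hb1uv : b1 = u ∨ b1 = v
        · have hbD : b1 ∈ D := by rcases hb1uv with rfl | rfl; exacts [hu, hv]
          exact Or.inl ⟨inl b1, hmem _ hbD, sub_transfer_adj hb11 (by tauto) (by tauto)⟩
        · by_cases hb2uv : b2 = u ∨ b2 = v
          · have hbD : b2 ∈ D := by rcases hb2uv with rfl | rfl; exacts [hu, hv]
            exact Or.inl ⟨inl b2, hmem _ hbD, sub_transfer_adj hb21 (by tauto) (by tauto)⟩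
          · push_neg at hb1uv hb2uv
            exact Or.inr ⟨inl d1, hmem _ hd1, inl d2, hmem _ hd2, by simpa using hne,
              sub_transfer_dist2 h1 hb11 hb12 (by tauto) (by tauto) (by tauto) (by tauto),
              sub_transfer_dist2 h2 hb21 hb22 (by tauto) (by tauto) (by tauto) (by tauto)⟩
    · have hj : j ≠ 1 := fun e => ha (e ▸ hmemr 1)
      fin_cases j
      · exact Or.inl ⟨inl u, hmem _ hu, sub_adj_u0.symm⟩
      · exact absurd rfl hj
      · exact Or.inl ⟨inl v, hmem _ hv, sub_adj_2v⟩
  · -- Case 2 : u ∈ D, v ∉ D; add x₃ = inr 2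
    refine ⟨2, ?_⟩
    rintro (w | j) ha
    · have hw : w ∉ D := fun h => ha (hmem _ h)
      have hwu : w ≠ u := fun e => hw (e ▸ hu)
      by_cases hwv : w = v
      · exact Or.inl ⟨inr 2, hmemr 2, hwv ▸ sub_adj_2v.symm⟩
      · have hd_ne_v : ∀ d ∈ D, d ≠ v := fun d hd e => hv (e ▸ hd)
        rcases hD w hw with ⟨d, hdD, hadj⟩ | ⟨d1, hd1, d2, hd2, hne, h1, h2⟩
        · exact Or.inl ⟨inl d, hmem _ hdD, sub_transfer_adj hadj (by tauto) (by tauto)⟩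
        · obtain ⟨b1, hb11, hb12⟩ := exists_mid_of_dist_eq_two G h1
          obtain ⟨b2, hb21, hb22⟩ := exists_mid_of_dist_eq_two G h2
          have hd1v : d1 ≠ v := hd_ne_v _ hd1
          have hd2v : d2 ≠ v := hd_ne_v _ hd2
          by_cases hbr1 : b1 = v ∧ d1 = u
          · obtain ⟨hb1v, hd1u⟩ := hbr1
            have hwadjv : G.Adj w v := hb1v ▸ hb11
            have hd2u : d2 ≠ u := fun e => hne (hd1u.trans e.symm)
            refine Or.inr ⟨inr 2, hmemr 2, inl d2, hmem _ hd2, by simp, ?_, ?_⟩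
            · exact dist_eq_two_of _ (sub_transfer_adj hwadjv (by tauto) (by tauto))
                sub_adj_2v.symm (sub_not_adj_inl_inr2 hwv) (by simp)
            · exact sub_transfer_dist2 h2 hb21 hb22 (by tauto) (by tauto) (by tauto) (by tauto)
          · by_cases hbr2 : b2 = v ∧ d2 = u
            · obtain ⟨hb2v, hd2u⟩ := hbr2
              have hwadjv : G.Adj w v := hb2v ▸ hb21
              have hd1u : d1 ≠ u := fun e => hne.symm (hd2u.trans e.symm)
              refine Or.inr ⟨inr 2, hmemr 2, inl d1, hmem _ hd1, by simp, ?_, ?_⟩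
              · exact dist_eq_two_of _ (sub_transfer_adj hwadjv (by tauto) (by tauto))
                  sub_adj_2v.symm (sub_not_adj_inl_inr2 hwv) (by simp)
              · exact sub_transfer_dist2 h1 hb11 hb12 (by tauto) (by tauto) (by tauto) (by tauto)
            · exact Or.inr ⟨inl d1, hmem _ hd1, inl d2, hmem _ hd2, by simpa using hne,
                sub_transfer_dist2 h1 hb11 hb12 (by tauto) (by tauto) (by tauto) (by tauto),
                sub_transfer_dist2 h2 hb21 hb22 (by tauto) (by tauto) (by tauto) (by tauto)⟩
    · have hj : j ≠ 2 := fun e => ha (e ▸ hmemr 2)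
      fin_cases j
      · exact Or.inl ⟨inl u, hmem _ hu, sub_adj_u0.symm⟩
      · exact Or.inl ⟨inr 2, hmemr 2, sub_adj_12⟩
      · exact absurd rfl hj
  · -- Case 3 : u ∉ D, v ∈ D; add x₁ = inr 0
    refine ⟨0, ?_⟩
    rintro (w | j) ha
    · have hw : w ∉ D := fun h => ha (hmem _ h)
      have hwv : w ≠ v := fun e => hw (e ▸ hv)
      by_cases hwu : w = u
      · exact Or.inl ⟨inr 0, hmemr 0, hwu ▸ sub_adj_u0⟩
      · have hd_ne_u : ∀ d ∈ D, d ≠ u := fun d hd e => hu (e ▸ hd)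
        rcases hD w hw with ⟨d, hdD, hadj⟩ | ⟨d1, hd1, d2, hd2, hne, h1, h2⟩
        · exact Or.inl ⟨inl d, hmem _ hdD, sub_transfer_adj hadj (by tauto) (by tauto)⟩
        · obtain ⟨b1, hb11, hb12⟩ := exists_mid_of_dist_eq_two G h1
          obtain ⟨b2, hb21, hb22⟩ := exists_mid_of_dist_eq_two G h2
          have hd1u : d1 ≠ u := hd_ne_u _ hd1
          have hd2u : d2 ≠ u := hd_ne_u _ hd2
          by_cases hbr1 : b1 = u ∧ d1 = v
          · obtain ⟨hb1u, hd1v⟩ := hbr1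
            have hwadju : G.Adj w u := hb1u ▸ hb11
            have hd2v : d2 ≠ v := fun e => hne (hd1v.trans e.symm)
            refine Or.inr ⟨inr 0, hmemr 0, inl d2, hmem _ hd2, by simp, ?_, ?_⟩
            · exact dist_eq_two_of _ (sub_transfer_adj hwadju (by tauto) (by tauto))
                sub_adj_u0 (sub_not_adj_inl_inr0 hwu) (by simp)
            · exact sub_transfer_dist2 h2 hb21 hb22 (by tauto) (by tauto) (by tauto) (by tauto)
          · by_cases hbr2 : b2 = u ∧ d2 = v
            · obtain ⟨hb2u, hd2v⟩ := hbr2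
              have hwadju : G.Adj w u := hb2u ▸ hb21
              have hd1v : d1 ≠ v := fun e => hne.symm (hd2v.trans e.symm)
              refine Or.inr ⟨inr 0, hmemr 0, inl d1, hmem _ hd1, by simp, ?_, ?_⟩
              · exact dist_eq_two_of _ (sub_transfer_adj hwadju (by tauto) (by tauto))
                  sub_adj_u0 (sub_not_adj_inl_inr0 hwu) (by simp)
              · exact sub_transfer_dist2 h1 hb11 hb12 (by tauto) (by tauto) (by tauto) (by tauto)
            · exact Or.inr ⟨inl d1, hmem _ hd1, inl d2, hmem _ hd2, by simpa using hne,
                sub_transfer_dist2 h1 hb11 hb12 (by tauto) (by tauto) (by tauto) (by tauto),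
                sub_transfer_dist2 h2 hb21 hb22 (by tauto) (by tauto) (by tauto) (by tauto)⟩
    · have hj : j ≠ 0 := fun e => ha (e ▸ hmemr 0)
      fin_cases j
      · exact absurd rfl hj
      · exact Or.inl ⟨inr 0, hmemr 0, sub_adj_01.symm⟩
      · exact Or.inl ⟨inl v, hmem _ hv, sub_adj_2v⟩
  · -- Case 4 : u ∉ D, v ∉ D
    have hd_ne_u : ∀ d ∈ D, d ≠ u := fun d hd e => hu (e ▸ hd)
    have hd_ne_v : ∀ d ∈ D, d ≠ v := fun d hd e => hv (e ▸ hd)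
    by_cases hNv : ∃ d ∈ D, G.Adj v d
    · -- 4a : v has a neighbour in D; add x₁ = inr 0
      obtain ⟨d0, hd0D, hd0adj⟩ := hNv
      have hd0u : d0 ≠ u := hd_ne_u _ hd0D
      have hd0v : d0 ≠ v := hd_ne_v _ hd0D
      refine ⟨0, ?_⟩
      rintro (w | j) ha
      · have hw : w ∉ D := fun h => ha (hmem _ h)
        by_cases hwu : w = u
        · exact Or.inl ⟨inr 0, hmemr 0, hwu ▸ sub_adj_u0⟩
        · by_cases hwv : w = v
          · subst hwv
            exact Or.inl ⟨inl d0, hmem _ hd0D,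
              sub_transfer_adj hd0adj (fun h => huv.ne' h.1) (by tauto)⟩
          · rcases hD w hw with ⟨d, hdD, hadj⟩ | ⟨d1, hd1, d2, hd2, hne, h1, h2⟩
            · exact Or.inl ⟨inl d, hmem _ hdD, sub_transfer_adj hadj (by tauto) (by tauto)⟩
            · obtain ⟨b1, hb11, hb12⟩ := exists_mid_of_dist_eq_two G h1
              obtain ⟨b2, hb21, hb22⟩ := exists_mid_of_dist_eq_two G h2
              have hd1u := hd_ne_u _ hd1; have hd1v := hd_ne_v _ hd1
              have hd2u := hd_ne_u _ hd2; have hd2v := hd_ne_v _ hd2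
              exact Or.inr ⟨inl d1, hmem _ hd1, inl d2, hmem _ hd2, by simpa using hne,
                sub_transfer_dist2 h1 hb11 hb12 (by tauto) (by tauto) (by tauto) (by tauto),
                sub_transfer_dist2 h2 hb21 hb22 (by tauto) (by tauto) (by tauto) (by tauto)⟩
      · have hj : j ≠ 0 := fun e => ha (e ▸ hmemr 0)
        fin_cases j
        · exact absurd rfl hj
        · exact Or.inl ⟨inr 0, hmemr 0, sub_adj_01.symm⟩
        · refine Or.inr ⟨inr 0, hmemr 0, inl d0, hmem _ hd0D, by simp, ?_, ?_⟩
          · exact dist_eq_two_of _ sub_adj_12.symm sub_adj_01.symm sub_not_adj_inr20 (by simp)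
          · refine dist_eq_two_of _ sub_adj_2v
              (sub_transfer_adj hd0adj (fun h => huv.ne' h.1) (by tauto)) ?_ (by simp)
            exact fun hA => (sub_not_adj_inl_inr2 hd0v) hA.symm
    · by_cases hNu : ∃ d ∈ D, G.Adj u d
      · -- 4b : u has a neighbour in D; add x₃ = inr 2
        obtain ⟨d0, hd0D, hd0adj⟩ := hNu
        have hd0u : d0 ≠ u := hd_ne_u _ hd0D
        have hd0v : d0 ≠ v := hd_ne_v _ hd0D
        refine ⟨2, ?_⟩
        rintro (w | j) ha
        · have hw : w ∉ D := fun h => ha (hmem _ h)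
          by_cases hwv : w = v
          · exact Or.inl ⟨inr 2, hmemr 2, hwv ▸ sub_adj_2v.symm⟩
          · by_cases hwu : w = u
            · subst hwu
              exact Or.inl ⟨inl d0, hmem _ hd0D,
                sub_transfer_adj hd0adj (by tauto) (fun h => huv.ne h.1)⟩
            · rcases hD w hw with ⟨d, hdD, hadj⟩ | ⟨d1, hd1, d2, hd2, hne, h1, h2⟩
              · exact Or.inl ⟨inl d, hmem _ hdD, sub_transfer_adj hadj (by tauto) (by tauto)⟩
              · obtain ⟨b1, hb11, hb12⟩ := exists_mid_of_dist_eq_two G h1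
                obtain ⟨b2, hb21, hb22⟩ := exists_mid_of_dist_eq_two G h2
                have hd1u := hd_ne_u _ hd1; have hd1v := hd_ne_v _ hd1
                have hd2u := hd_ne_u _ hd2; have hd2v := hd_ne_v _ hd2
                exact Or.inr ⟨inl d1, hmem _ hd1, inl d2, hmem _ hd2, by simpa using hne,
                  sub_transfer_dist2 h1 hb11 hb12 (by tauto) (by tauto) (by tauto) (by tauto),
                  sub_transfer_dist2 h2 hb21 hb22 (by tauto) (by tauto) (by tauto) (by tauto)⟩
        · have hj : j ≠ 2 := fun e => ha (e ▸ hmemr 2)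
          fin_cases j
          · refine Or.inr ⟨inr 2, hmemr 2, inl d0, hmem _ hd0D, by simp, ?_, ?_⟩
            · exact dist_eq_two_of _ sub_adj_01 sub_adj_12 sub_not_adj_inr02 (by simp)
            · refine dist_eq_two_of _ sub_adj_u0.symm
                (sub_transfer_adj hd0adj (by tauto) (fun h => huv.ne h.1)) ?_ (by simp)
              exact fun hA => (sub_not_adj_inl_inr0 hd0u) hA.symm
          · exact Or.inl ⟨inr 2, hmemr 2, sub_adj_12⟩
          · exact absurd rfl hj
      · -- 4c : neither u nor v has a neighbour in D; add x₂ = inr 1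
        refine ⟨1, ?_⟩
        rintro (w | j) ha
        · have hw : w ∉ D := fun h => ha (hmem _ h)
          rcases hD w hw with ⟨d, hdD, hadj⟩ | ⟨d1, hd1, d2, hd2, hne, h1, h2⟩
          · have hdu := hd_ne_u _ hdD; have hdv := hd_ne_v _ hdD
            exact Or.inl ⟨inl d, hmem _ hdD, sub_transfer_adj hadj (by tauto) (by tauto)⟩
          · obtain ⟨b1, hb11, hb12⟩ := exists_mid_of_dist_eq_two G h1
            obtain ⟨b2, hb21, hb22⟩ := exists_mid_of_dist_eq_two G h2
            have hd1u := hd_ne_u _ hd1; have hd1v := hd_ne_v _ hd1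
            have hd2u := hd_ne_u _ hd2; have hd2v := hd_ne_v _ hd2
            have c11 : ¬(w = u ∧ b1 = v) := by
              rintro ⟨rfl, rfl⟩; exact hNv ⟨d1, hd1, hb12⟩
            have c12 : ¬(w = v ∧ b1 = u) := by
              rintro ⟨rfl, rfl⟩; exact hNu ⟨d1, hd1, hb12⟩
            have c21 : ¬(w = u ∧ b2 = v) := by
              rintro ⟨rfl, rfl⟩; exact hNv ⟨d2, hd2, hb22⟩
            have c22 : ¬(w = v ∧ b2 = u) := by
              rintro ⟨rfl, rfl⟩; exact hNu ⟨d2, hd2, hb22⟩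
            exact Or.inr ⟨inl d1, hmem _ hd1, inl d2, hmem _ hd2, by simpa using hne,
              sub_transfer_dist2 h1 hb11 hb12 c11 c12 (by tauto) (by tauto),
              sub_transfer_dist2 h2 hb21 hb22 c21 c22 (by tauto) (by tauto)⟩
        · have hj : j ≠ 1 := fun e => ha (e ▸ hmemr 1)
          fin_cases j
          · exact Or.inl ⟨inr 1, hmemr 1, sub_adj_01⟩
          · exact absurd rfl hj
          · exact Or.inl ⟨inr 1, hmemr 1, sub_adj_12.symm⟩

/-- If `G` is connected, `uv ∈ E(G)`, `G'` is obtained from `G` by subdividing the edge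
`uv` three times and `γ₂ᵈ(G) ≤ |V(G)|/3`, then `γ₂ᵈ(G') ≤ |V(G')|/3`. -/
theorem disjDomNum_subdivideThrice_le_third {V : Type*} [Fintype V] (G : SimpleGraph V)
    (u v : V) (hconn : G.Connected) (huv : G.Adj u v)
    (h : (disjDomNum G : ℝ) ≤ (Fintype.card V : ℝ) / 3) :
    (disjDomNum (subdivideThrice G u v) : ℝ) ≤ (Fintype.card (V ⊕ Fin 3) : ℝ) / 3 := by
  classical
  have hne : {n : ℕ | ∃ D : Set V, IsDisjDomSet G D ∧ D.ncard = n}.Nonempty :=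
    ⟨(Set.univ : Set V).ncard, Set.univ, fun w hw => absurd (Set.mem_univ w) hw, rfl⟩
  obtain ⟨D, hD, hcard⟩ : ∃ D : Set V, IsDisjDomSet G D ∧ D.ncard = disjDomNum G :=
    Nat.sInf_mem hne
  obtain ⟨i, hi⟩ := sub_isDisjDom huv hD
  have hc : (insert (inr i : V ⊕ Fin 3) (inl '' D)).ncard = D.ncard + 1 := by
    rw [Set.ncard_insert_of_notMem (by simp) (Set.toFinite _),
      Set.ncard_image_of_injective _ Sum.inl_injective]
  have hle : disjDomNum (subdivideThrice G u v) ≤ disjDomNum G + 1 := by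
    have hmemS : (insert (inr i : V ⊕ Fin 3) (inl '' D)).ncard ∈
        {n : ℕ | ∃ D' : Set (V ⊕ Fin 3),
          IsDisjDomSet (subdivideThrice G u v) D' ∧ D'.ncard = n} := ⟨_, hi, rfl⟩
    have := Nat.sInf_le hmemS
    rw [hc, hcard] at this
    exact this
  have hcv : (Fintype.card (V ⊕ Fin 3) : ℝ) = (Fintype.card V : ℝ) + 3 := by
    simp [Fintype.card_sum]
  have : (disjDomNum (subdivideThrice G u v) : ℝ) ≤ (disjDomNum G : ℝ) + 1 := by
    exact_mod_cast hle
  rw [hcv]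
  linarith
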